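/- For any real c > 1 and any polynomial s of degree at most k, the supremum over η ∈ [-1,1] of |s(η) - 1/(η - c)| is at least (c - √(c² - 1))^k/(c² - 1). -/

import Mathlib

open Polynomial Real Set

set_option maxHeartbeats 1000000

private lemma stmt12_natDegree_T_le : ∀ n : ℕ, (Polynomial.Chebyshev.T ℝ n).natDegree ≤ n
  | 0 => by simp [Polynomial.Chebyshev.T_zero]
  | 1 => by simp [Polynomial.Chebyshev.T_one]
  | (n+2) => by
    have h1 := stmt12_natDegree_T_le (n+1)
    have h2 := stmt12_natDegree_T_le n
    rw [show (((n+2:ℕ)):ℤ) = ((n:ℤ)+2) by push_cast; ring, Polynomial.Chebyshev.T_add_two]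
    refine le_trans (Polynomial.natDegree_sub_le _ _) ?_
    have h3 : (2 * X * Polynomial.Chebyshev.T ℝ ((n:ℤ)+1)).natDegree ≤ n + 2 := by
      refine le_trans (Polynomial.natDegree_mul_le) ?_
      have h4 : (2 * X : ℝ[X]).natDegree ≤ 1 := by
        refine le_trans (Polynomial.natDegree_mul_le) ?_
        simp
      have h5 : (Polynomial.Chebyshev.T ℝ ((n:ℤ)+1)).natDegree ≤ n+1 := by
        rw [show ((n:ℤ)+1) = (((n+1:ℕ)):ℤ) by push_cast; ring]
        exact h1
      omega
    have h6 : (Polynomial.Chebyshev.T ℝ ((n:ℤ))).natDegree ≤ n := h2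
    omega

private lemma stmt12_eval_T (ρ c : ℝ) (hρ : ρ ≠ 0) (h : ρ^2 + 1 = 2*c*ρ) :
    ∀ n : ℕ, (Polynomial.Chebyshev.T ℝ n).eval c = (ρ^n + ρ⁻¹^n)/2
  | 0 => by simp [Polynomial.Chebyshev.T_zero]
  | 1 => by
    simp only [Nat.cast_one, Polynomial.Chebyshev.T_one, Polynomial.eval_X]
    field_simp
    linear_combination -h
  | (n+2) => by
    have h1 := stmt12_eval_T ρ c hρ h (n+1)
    have h2 := stmt12_eval_T ρ c hρ h n
    rw [show (((n+2:ℕ)):ℤ) = ((n:ℤ)+2) by push_cast; ring, Polynomial.Chebyshev.T_add_two]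
    simp only [Polynomial.eval_sub, Polynomial.eval_mul, Polynomial.eval_ofNat,
      Polynomial.eval_X]
    rw [show ((n:ℤ)+1) = (((n+1:ℕ)):ℤ) by push_cast; ring, h1]
    rw [h2]
    have hρi : ρ⁻¹ ≠ 0 := inv_ne_zero hρ
    have hm : ρ * ρ⁻¹ = 1 := mul_inv_cancel₀ hρ
    have hc2 : 2*c = ρ + ρ⁻¹ := by linear_combination (-ρ⁻¹) * h + (ρ - 2*c) * hm
    linear_combination (ρ^(n+1)+ρ⁻¹^(n+1))/2 * hc2 + (ρ^n+ρ⁻¹^n)/2 * hm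

private lemma stmt12_key_trig (ρ θ K : ℝ) (h0 : 0 < ρ) (h1 : ρ < 1) :
    Real.cos ((K+1)*θ) - 2*ρ*Real.cos (K*θ) + ρ^2*Real.cos ((K-1)*θ)
    = (1 - 2*ρ*Real.cos θ + ρ^2) *
      Real.cos ((K+1)*θ + 2*Real.arctan (ρ*Real.sin θ/(1-ρ*Real.cos θ))) := by
  have hx1 := Real.cos_le_one θ
  have hd : 0 < 1 - ρ*Real.cos θ := by nlinarith
  set u : ℝ := ρ*Real.sin θ/(1-ρ*Real.cos θ) with hu
  have h1u : (0:ℝ) < 1 + u^2 := by positivity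
  have hsqrt : (Real.sqrt (1+u^2))^2 = 1 + u^2 := Real.sq_sqrt h1u.le
  have hs0 : Real.sqrt (1+u^2) ≠ 0 := by positivity
  have hcos2 : Real.cos (2*Real.arctan u) = (1 - u^2)/(1+u^2) := by
    rw [Real.cos_two_mul, Real.cos_arctan, div_pow, one_pow, hsqrt]
    field_simp
    ring
  have hsin2 : Real.sin (2*Real.arctan u) = 2*u/(1+u^2) := by
    rw [Real.sin_two_mul, Real.sin_arctan, Real.cos_arctan]
    field_simp
    rw [hsqrt]
  have hpyth := Real.sin_sq_add_cos_sq θ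
  have hden : (1+u^2) * (1-ρ*Real.cos θ)^2 = 1-2*ρ*Real.cos θ+ρ^2 := by
    rw [hu]
    field_simp
    linear_combination ρ^2 * hpyth
  have hu2 : u^2 * (1-ρ*Real.cos θ)^2 = ρ^2*(Real.sin θ)^2 := by
    rw [hu]; field_simp
  have huu : u * (1-ρ*Real.cos θ) = ρ*Real.sin θ := by
    rw [hu]; field_simp
  have hA : Real.cos (2*Real.arctan u) * (1-2*ρ*Real.cos θ+ρ^2)
      = (1-ρ*Real.cos θ)^2 - ρ^2*(Real.sin θ)^2 := by
    rw [hcos2, ← hden, ← hu2]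
    field_simp
  have hB : Real.sin (2*Real.arctan u) * (1-2*ρ*Real.cos θ+ρ^2)
      = 2*ρ*Real.sin θ*(1-ρ*Real.cos θ) := by
    rw [hsin2, ← hden]
    rw [div_mul_eq_mul_div, div_eq_iff h1u.ne']
    linear_combination (2 * (1-ρ*Real.cos θ) * (1+u^2)) * huu
  have e1 : K*θ = (K+1)*θ - θ := by ring
  have e2 : (K-1)*θ = (K+1)*θ - 2*θ := by ring
  rw [e1, e2, Real.cos_sub, Real.cos_sub, Real.cos_add, Real.cos_two_mul, Real.sin_two_mul]
  have expand : (1 - 2*ρ*Real.cos θ + ρ^2) *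
      (Real.cos ((K+1)*θ) * Real.cos (2*Real.arctan u)
        - Real.sin ((K+1)*θ) * Real.sin (2*Real.arctan u))
      = Real.cos ((K+1)*θ) * ((1-ρ*Real.cos θ)^2 - ρ^2*(Real.sin θ)^2)
        - Real.sin ((K+1)*θ) * (2*ρ*Real.sin θ*(1-ρ*Real.cos θ)) := by
    rw [← hA, ← hB]; ring
  rw [expand]
  linear_combination (ρ^2 * Real.cos ((K+1)*θ)) * hpyth

theorem stmt_12 (c : ℝ) (hc : 1 < c) (k : ℕ) (s : Polynomial ℝ) (hs : s.degree ≤ k) :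
    sSup ((fun η => |s.eval η - 1 / (η - c)|) '' Set.Icc (-1 : ℝ) 1) ≥
      (c - Real.sqrt (c ^ 2 - 1)) ^ k / (c ^ 2 - 1) := by
  have hc1 : (0:ℝ) < c^2 - 1 := by nlinarith
  have hsq : Real.sqrt (c^2-1) ^ 2 = c^2 - 1 := Real.sq_sqrt hc1.le
  have hsqnn : 0 ≤ Real.sqrt (c^2-1) := Real.sqrt_nonneg _
  set ρ : ℝ := c - Real.sqrt (c^2-1) with hρdef
  have hρ0 : 0 < ρ := by nlinarith
  have hρ1 : ρ < 1 := by nlinarith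
  have hrel : ρ^2 + 1 = 2*c*ρ := by rw [hρdef]; linear_combination hsq
  clear_value ρ
  set E : ℝ := ρ^k/(c^2-1) with hEdef
  have hE0 : 0 < E := by positivity
  clear_value E
  set M : ℝ := sSup ((fun η => |s.eval η - 1 / (η - c)|) '' Set.Icc (-1 : ℝ) 1) with hMdef
  rw [ge_iff_le]
  by_contra hcon
  push_neg at hcon
  -- hcon : M < E
  -- boundedness and basic sup bound
  have hcont : ContinuousOn (fun η : ℝ => |s.eval η - 1/(η - c)|) (Set.Icc (-1 : ℝ) 1) := by
    apply ContinuousOn.abs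
    apply ContinuousOn.sub
    · exact (Polynomial.continuous s).continuousOn
    · apply ContinuousOn.div continuousOn_const
        ((continuous_id.sub continuous_const).continuousOn)
      intro x hx
      have : x < c := lt_of_le_of_lt hx.2 hc
      exact sub_ne_zero.mpr this.ne
  have hbdd : BddAbove ((fun η => |s.eval η - 1 / (η - c)|) '' Set.Icc (-1 : ℝ) 1) :=
    (isCompact_Icc.image_of_continuousOn hcont).bddAbove
  have hub : ∀ z ∈ Set.Icc (-1:ℝ) 1, |s.eval z - 1/(z - c)| ≤ M :=
    fun z hz => le_csSup hbdd ⟨z, hz, rfl⟩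
  -- polynomial setup
  set Q : Polynomial ℝ := Polynomial.Chebyshev.T ℝ ((k:ℤ)+1) - C (2*ρ) * Polynomial.Chebyshev.T ℝ (k:ℤ)
      + C (ρ^2) * Polynomial.Chebyshev.T ℝ ((k:ℤ)-1) with hQdef
  set a : ℝ := E/(2*ρ) with hadef
  clear_value a
  have hkey : (c^2-1)*(4*ρ^2) = (1-ρ^2)^2 := by nlinarith [hrel]
  have hQc : Q.eval c = (1-ρ^2)^2/(2*ρ^(k+1)) := by
    rw [hQdef]
    simp only [Polynomial.eval_add, Polynomial.eval_sub, Polynomial.eval_mul, Polynomial.eval_C]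
    cases k with
    | zero =>
      norm_num [Polynomial.Chebyshev.T_one, Polynomial.Chebyshev.T_zero,
        Polynomial.Chebyshev.T_neg_one]
      field_simp
      linear_combination (-(ρ^2)-1) * hrel
    | succ m =>
      rw [show ((((m+1:ℕ)):ℤ)+1) = (((m+2:ℕ)):ℤ) by push_cast; ring,
        show ((((m+1:ℕ)):ℤ)-1) = ((m:ℕ):ℤ) by push_cast; ring,
        stmt12_eval_T ρ c hρ0.ne' hrel (m+2), stmt12_eval_T ρ c hρ0.ne' hrel (m+1),
        stmt12_eval_T ρ c hρ0.ne' hrel m]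
      have hρm : ρ^m ≠ 0 := pow_ne_zero _ hρ0.ne'
      rw [inv_pow, inv_pow, inv_pow]
      rw [pow_succ, pow_succ, pow_succ, pow_succ]
      field_simp
      ring
  set D : Polynomial ℝ := (X - C c) * s - 1 + C a * Q with hDdef
  have hDc : D.eval c = 0 := by
    have h1 : c^2 - 1 ≠ 0 := hc1.ne'
    have h2 : ρ ≠ 0 := hρ0.ne'
    have h3 : ρ^k ≠ 0 := pow_ne_zero _ h2
    have hone : a * ((1-ρ^2)^2/(2*ρ^(k+1))) = 1 := by
      rw [hadef, hEdef, pow_succ, div_div, div_mul_div_comm]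
      rw [div_eq_one_iff_eq (by positivity)]
      linear_combination (-(ρ^k)) * hkey
    rw [hDdef]
    simp only [Polynomial.eval_add, Polynomial.eval_sub, Polynomial.eval_mul, Polynomial.eval_C,
      Polynomial.eval_X, Polynomial.eval_one]
    rw [hQc]
    linear_combination hone
  have hsnat : s.natDegree ≤ k := Polynomial.natDegree_le_iff_degree_le.mpr hs
  have hdegD : D.natDegree ≤ k + 1 := by
    rw [hDdef]
    refine le_trans (Polynomial.natDegree_add_le _ _) ?_
    have h1 : ((X - C c) * s - 1).natDegree ≤ k+1 := by
      refine le_trans (Polynomial.natDegree_sub_le _ _) ?_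
      have : ((X - C c) * s).natDegree ≤ k+1 := by
        refine le_trans (Polynomial.natDegree_mul_le) ?_
        rw [Polynomial.natDegree_X_sub_C]
        omega
      simp only [Polynomial.natDegree_one]
      omega
    have h2 : (C a * Q).natDegree ≤ k+1 := by
      refine le_trans (Polynomial.natDegree_mul_le) ?_
      rw [Polynomial.natDegree_C]
      have hQ3 : Q.natDegree ≤ k+1 := by
        rw [hQdef]
        refine le_trans (Polynomial.natDegree_add_le _ _) ?_
        have e1 : (Polynomial.Chebyshev.T ℝ ((k:ℤ)+1)).natDegree ≤ k+1 := by
          rw [show ((k:ℤ)+1) = (((k+1:ℕ)):ℤ) by push_cast; ring]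
          exact stmt12_natDegree_T_le (k+1)
        have e2 : (C (2*ρ) * Polynomial.Chebyshev.T ℝ (k:ℤ)).natDegree ≤ k+1 := by
          refine le_trans (Polynomial.natDegree_mul_le) ?_
          rw [Polynomial.natDegree_C]
          have := stmt12_natDegree_T_le k
          omega
        have e3 : (C (ρ^2) * Polynomial.Chebyshev.T ℝ ((k:ℤ)-1)).natDegree ≤ k+1 := by
          refine le_trans (Polynomial.natDegree_mul_le) ?_
          rw [Polynomial.natDegree_C]
          have h4 : (Polynomial.Chebyshev.T ℝ ((k:ℤ)-1)).natDegree ≤ ((k:ℤ)-1).natAbs := by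
            rw [← Polynomial.Chebyshev.T_natAbs]
            exact stmt12_natDegree_T_le _
          have h5 : ((k:ℤ)-1).natAbs ≤ k+1 := by omega
          omega
        have e4 := Polynomial.natDegree_sub_le (Polynomial.Chebyshev.T ℝ ((k:ℤ)+1))
          (C (2*ρ) * Polynomial.Chebyshev.T ℝ (k:ℤ))
        omega
      omega
    omega
  set d : Polynomial ℝ := D /ₘ (X - C c) with hddef
  have hDd : (X - C c) * d = D := Polynomial.mul_divByMonic_eq_iff_isRoot.2 hDc
  have hdegd : d.natDegree ≤ k := by
    rw [hddef, Polynomial.natDegree_divByMonic D (Polynomial.monic_X_sub_C c),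
      Polynomial.natDegree_X_sub_C]
    omega
  set estar : ℝ → ℝ := fun x => a * Q.eval x / (c - x) with hestardef
  have hd_eval : ∀ x : ℝ, x ≠ c → d.eval x = (s.eval x - 1/(x - c)) - estar x := by
    intro x hx
    have hxc : x - c ≠ 0 := sub_ne_zero.mpr hx
    have hcx : c - x ≠ 0 := sub_ne_zero.mpr (Ne.symm hx)
    have h1 : (x - c) * d.eval x = (x - c) * s.eval x - 1 + a * Q.eval x := by
      have := congrArg (Polynomial.eval x) hDd
      simpa [hDdef] using this
    rw [hestardef]
    field_simp
    linear_combination (c - x) * h1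
  -- the phase function
  set ψ : ℝ → ℝ := fun θ => ((k:ℝ)+1)*θ + 2*Real.arctan (ρ*Real.sin θ/(1-ρ*Real.cos θ)) with hψdef
  have hdenne : ∀ θ : ℝ, 1 - ρ*Real.cos θ ≠ 0 := by
    intro θ
    have := Real.cos_le_one θ
    nlinarith [Real.neg_one_le_cos θ]
  have hψcont : Continuous ψ := by
    apply Continuous.add
    · exact continuous_const.mul continuous_id
    · apply continuous_const.mul
      apply Real.continuous_arctan.comp
      exact (continuous_const.mul Real.continuous_sin).div
        (continuous_const.sub (continuous_const.mul Real.continuous_cos)) hdenne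
  have hψ0 : ψ 0 = 0 := by simp [hψdef]
  have hψπ : ψ π = ((k:ℝ)+1)*π := by simp [hψdef]
  have hQθ : ∀ θ : ℝ, Q.eval (Real.cos θ) = (1 - 2*ρ*Real.cos θ + ρ^2) * Real.cos (ψ θ) := by
    intro θ
    rw [hQdef]
    simp only [Polynomial.eval_add, Polynomial.eval_sub, Polynomial.eval_mul, Polynomial.eval_C,
      Polynomial.Chebyshev.T_real_cos]
    rw [hψdef]
    have := stmt12_key_trig ρ θ (k:ℝ) hρ0 hρ1
    push_cast
    linarith [this]
  have hcsub : ∀ θ : ℝ, (1 - 2*ρ*Real.cos θ + ρ^2) = 2*ρ*(c - Real.cos θ) := by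
    intro θ; linear_combination hrel
  have hestarθ : ∀ θ : ℝ, estar (Real.cos θ) = E * Real.cos (ψ θ) := by
    intro θ
    have hcx : c - Real.cos θ ≠ 0 := by
      have := Real.cos_le_one θ; nlinarith
    rw [hestardef]
    simp only
    rw [hQθ, hcsub, hadef]
    field_simp
  -- hitting times
  set S : ℕ → Set ℝ := fun j => Set.Icc 0 π ∩ ψ ⁻¹' (Set.Ici ((j:ℝ)*π)) with hSdef
  set t : ℕ → ℝ := fun j => sInf (S j) with htdef
  have hSclosed : ∀ j, IsClosed (S j) := fun j => isClosed_Icc.inter (isClosed_Ici.preimage hψcont)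
  have hSne : ∀ j : ℕ, j ≤ k+1 → π ∈ S j := by
    intro j hj
    refine ⟨⟨Real.pi_pos.le, le_refl _⟩, ?_⟩
    simp only [Set.mem_preimage, Set.mem_Ici, hψπ]
    have hjk : (j:ℝ) ≤ (k:ℝ)+1 := by exact_mod_cast hj
    exact mul_le_mul_of_nonneg_right hjk Real.pi_pos.le
  have hSbdd : ∀ j, BddBelow (S j) := fun j => bddBelow_Icc.mono Set.inter_subset_left
  have htmem : ∀ j : ℕ, j ≤ k+1 → t j ∈ S j :=
    fun j hj => (hSclosed j).csInf_mem ⟨π, hSne j hj⟩ (hSbdd j)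
  have hψt : ∀ j : ℕ, j ≤ k+1 → ψ (t j) = (j:ℝ)*π := by
    intro j hj
    refine le_antisymm ?_ (htmem j hj).2
    by_contra hlt
    push_neg at hlt
    have ht0 : 0 ≤ t j := (htmem j hj).1.1
    rcases eq_or_lt_of_le ht0 with h0 | h0
    · rw [← h0, hψ0] at hlt
      have : (0:ℝ) ≤ (j:ℝ)*π := by positivity
      linarith
    · have hopen : IsOpen {θ : ℝ | (j:ℝ)*π < ψ θ} := isOpen_lt continuous_const hψcont
      obtain ⟨ε, hε, hball⟩ := Metric.isOpen_iff.1 hopen (t j) hlt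
      set θ' := max (t j - ε/2) (t j / 2) with hθ'
      have h1' : θ' < t j := by
        apply max_lt <;> linarith
      have h2' : 0 < θ' := lt_of_lt_of_le (by linarith) (le_max_right _ _)
      have h3' : θ' ∈ Metric.ball (t j) ε := by
        rw [Metric.mem_ball, Real.dist_eq, abs_lt]
        constructor
        · have := le_max_left (t j - ε/2) (t j/2); linarith
        · linarith
      have h35 : (j:ℝ)*π < ψ θ' := hball h3'
      have h4' : θ' ∈ S j := ⟨⟨h2'.le, le_trans h1'.le (htmem j hj).1.2⟩, le_of_lt h35⟩
      have h5' := csInf_le (hSbdd j) h4'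
      have h6' : t j ≤ θ' := by simp only [htdef]; exact h5'
      linarith
  have htmono : ∀ i j : ℕ, i ≤ j → j ≤ k+1 → t i ≤ t j := by
    intro i j hij hj
    apply csInf_le_csInf (hSbdd i) ⟨π, hSne j hj⟩
    intro θ hθ
    refine ⟨hθ.1, ?_⟩
    have h1 : (i:ℝ)*π ≤ (j:ℝ)*π := by
      have : (i:ℝ) ≤ (j:ℝ) := by exact_mod_cast hij
      exact mul_le_mul_of_nonneg_right this Real.pi_pos.le
    exact le_trans h1 hθ.2
  have htstrict : ∀ i j : ℕ, i < j → j ≤ k+1 → t i < t j := by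
    intro i j hij hj
    rcases lt_or_eq_of_le (htmono i j hij.le hj) with h | h
    · exact h
    · exfalso
      have e1 := hψt i (by omega)
      have e2 := hψt j hj
      rw [h, e2] at e1
      have hij' : i = j := by
        have := mul_right_cancel₀ Real.pi_ne_zero e1
        exact_mod_cast this.symm
      omega
  set x : ℕ → ℝ := fun j => Real.cos (t j) with hxdef
  have hxmem : ∀ j : ℕ, x j ∈ Set.Icc (-1:ℝ) 1 :=
    fun j => ⟨Real.neg_one_le_cos _, Real.cos_le_one _⟩
  have hxne : ∀ j : ℕ, x j ≠ c := by
    intro j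
    have := Real.cos_le_one (t j)
    simp only [hxdef]
    nlinarith
  have hxlt : ∀ j : ℕ, j+1 ≤ k+1 → x (j+1) < x j := by
    intro j hj
    exact Real.strictAntiOn_cos (htmem j (by omega)).1 (htmem (j+1) hj).1 (htstrict j (j+1) (by omega) hj)
  have hxle : ∀ i j : ℕ, i ≤ j → j ≤ k+1 → x j ≤ x i := by
    intro i j hij hj
    rcases eq_or_lt_of_le hij with h | h
    · rw [h]
    · exact (Real.strictAntiOn_cos (htmem i (by omega)).1 (htmem j hj).1 (htstrict i j h hj)).le
  have hcosjπ : ∀ j : ℕ, Real.cos ((j:ℝ)*π) = (-1:ℝ)^j := by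
    intro j
    simpa using Real.cos_nat_mul_pi_sub 0 j
  have hestarj : ∀ j : ℕ, j ≤ k+1 → estar (x j) = E * (-1:ℝ)^j := by
    intro j hj
    rw [hxdef]
    simp only
    rw [hestarθ, hψt j hj, hcosjπ]
  have hsignj : ∀ j : ℕ, j ≤ k+1 → 0 < (-1:ℝ)^(j+1) * d.eval (x j) := by
    intro j hj
    have hde := hd_eval (x j) (hxne j)
    have habs := hub (x j) (hxmem j)
    have habs' := abs_le.1 habs
    rw [hestarj j hj] at hde
    rcases Nat.even_or_odd j with he | ho
    · rw [he.neg_one_pow] at hde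
      rw [Even.add_one he |>.neg_one_pow]
      rw [hde]
      have : s.eval (x j) - 1/(x j - c) ≤ M := le_trans (le_abs_self _) habs
      nlinarith
    · rw [ho.neg_one_pow] at hde
      rw [Odd.add_one ho |>.neg_one_pow]
      rw [hde]
      have : -M ≤ s.eval (x j) - 1/(x j - c) := by
        have := neg_abs_le (s.eval (x j) - 1/(x j - c))
        linarith
      nlinarith
  -- roots between alternation points
  have hroots : ∀ j : Fin (k+1), ∃ y, y ∈ Set.Ioo (x ((j:ℕ)+1)) (x (j:ℕ)) ∧ d.eval y = 0 := by
    intro j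
    have hjk : (j:ℕ) + 1 ≤ k + 1 := j.isLt
    have hlt := hxlt (j:ℕ) hjk
    have hs1 := hsignj (j:ℕ) (by omega)
    have hs2 := hsignj ((j:ℕ)+1) hjk
    have hcd : ContinuousOn (fun z => d.eval z) (Set.Icc (x ((j:ℕ)+1)) (x (j:ℕ))) :=
      (Polynomial.continuous d).continuousOn
    rcases Nat.even_or_odd (j:ℕ) with he | ho
    · -- j even : d(x j) < 0 < d(x (j+1))
      have h1 : 0 < d.eval (x ((j:ℕ)+1)) := by
        have h6 : ((-1:ℝ))^((j:ℕ)+1+1) = 1 := (Even.add_one he).add_one.neg_one_pow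
        rw [h6] at hs2
        linarith
      have h2 : d.eval (x (j:ℕ)) < 0 := by
        have h6 : ((-1:ℝ))^((j:ℕ)+1) = -1 := (Even.add_one he).neg_one_pow
        rw [h6] at hs1
        nlinarith
      have h0 : (0:ℝ) ∈ Set.Ioo (d.eval (x (j:ℕ))) (d.eval (x ((j:ℕ)+1))) := ⟨h2, h1⟩
      obtain ⟨y, hy1, hy2⟩ := intermediate_value_Ioo' hlt.le hcd h0
      exact ⟨y, hy1, hy2⟩
    · have h1 : d.eval (x ((j:ℕ)+1)) < 0 := by
        have h6 : ((-1:ℝ))^((j:ℕ)+1+1) = -1 := (Odd.add_one ho).add_one.neg_one_pow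
        rw [h6] at hs2
        nlinarith
      have h2 : 0 < d.eval (x (j:ℕ)) := by
        have h6 : ((-1:ℝ))^((j:ℕ)+1) = 1 := (Odd.add_one ho).neg_one_pow
        rw [h6] at hs1
        linarith
      have h0 : (0:ℝ) ∈ Set.Ioo (d.eval (x ((j:ℕ)+1))) (d.eval (x (j:ℕ))) := ⟨h1, h2⟩
      obtain ⟨y, hy1, hy2⟩ := intermediate_value_Ioo hlt.le hcd h0
      exact ⟨y, hy1, hy2⟩
  choose y hy1 hy2 using hroots
  have hyinj : Function.Injective y := by
    have hanti : ∀ i j : Fin (k+1), i < j → y j < y i := by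
      intro i j hij
      have h1 : y j < x (j:ℕ) := (hy1 j).2
      have h2 : x ((i:ℕ)+1) < y i := (hy1 i).1
      have h3 : x (j:ℕ) ≤ x ((i:ℕ)+1) := hxle ((i:ℕ)+1) (j:ℕ) (by omega) (by omega)
      linarith
    intro i j hij
    rcases lt_trichotomy i j with h | h | h
    · exact absurd hij (ne_of_gt (hanti i j h))
    · exact h
    · exact absurd hij (ne_of_lt (hanti j i h))
  have hd0 : d = 0 := by
    apply Polynomial.eq_zero_of_natDegree_lt_card_of_eval_eq_zero d hyinj hy2
    rw [Fintype.card_fin]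
    omega
  -- contradiction
  have hx0 := hd_eval (x 0) (hxne 0)
  rw [hd0] at hx0
  simp only [Polynomial.eval_zero] at hx0
  have he0 : estar (x 0) = E := by
    have := hestarj 0 (by omega)
    simpa using this
  rw [he0] at hx0
  have herr : s.eval (x 0) - 1/(x 0 - c) = E := by linarith
  have := hub (x 0) (hxmem 0)
  rw [herr] at this
  rw [abs_of_pos hE0] at this
  linarith
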